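/- Let D be a domain with quotient field K and let S be a torsion-free monoid with quotient group G. Then 𝔛(D[S]) ⊆ {P[S] : P ∈ 𝔛(D)} ∪ {Q̄ ∩ D[S] : Q̄ ∈ 𝔛(K[S])}, where D[S] ⊆ K[S] is the canonical inclusion, and also 𝔛(D[S]) ⊆ {D[P] : P ∈ 𝔛(S)} ∪ {Q̄ ∩ D[S] : Q̄ ∈ 𝔛(D[G])}, where D[S] ⊆ D[G] is the canonical inclusion. -/

import Mathlib

/-! ### Basic notions for monoids, monoid algebras and domains -/

/-- A monoid `S` (written additively) is torsion-free if `n • x = n • y` implies `x = y`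
for all integers `n ≥ 1`. -/
def AddTorsionFree (S : Type*) [AddCommMonoid S] : Prop :=
  ∀ n : ℕ, n ≠ 0 → ∀ x y : S, n • x = n • y → x = y

/-- An ideal of an additive monoid `S` is a nonempty subset `P` with `P + S ⊆ P`. -/
def IsMonoidIdeal {S : Type*} [AddCommMonoid S] (P : Set S) : Prop :=
  P.Nonempty ∧ ∀ p ∈ P, ∀ s : S, p + s ∈ P

/-- An ideal `P` of an additive monoid `S` is prime if `P ≠ S` and
`s + t ∈ P` implies `s ∈ P` or `t ∈ P`. -/
def IsMonoidPrimeIdeal {S : Type*} [AddCommMonoid S] (P : Set S) : Prop :=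
  IsMonoidIdeal P ∧ P ≠ Set.univ ∧ ∀ s t : S, s + t ∈ P → s ∈ P ∨ t ∈ P

/-- `P ∈ 𝔛(S)`: `P` is a minimal nonempty prime ideal of the monoid `S`. -/
def IsMinMonoidPrime {S : Type*} [AddCommMonoid S] (P : Set S) : Prop :=
  IsMonoidPrimeIdeal P ∧ ∀ Q : Set S, IsMonoidPrimeIdeal Q → Q ⊆ P → Q = P

/-- `P ∈ 𝔛(R)`: `P` is a height-one prime ideal of `R`, i.e. a nonzero prime ideal
that is minimal among the nonzero prime ideals. -/
def IsHeightOnePrime {R : Type*} [CommRing R] (P : Ideal R) : Prop :=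
  P.IsPrime ∧ P ≠ ⊥ ∧ ∀ Q : Ideal R, Q.IsPrime → Q < P → Q = ⊥

/-- `D[P]` for a subset `P ⊆ S`: the set of elements of the monoid algebra `D[S]`
all of whose exponents lie in `P`. -/
def expIn (D : Type*) {S : Type*} [CommRing D] [AddCommMonoid S] (P : Set S) :
    Set (AddMonoidAlgebra D S) :=
  {f | ∀ s ∈ f.coeff.support, s ∈ P}

/-- `I[S]` for an ideal `I` of `D`: the set of elements of the monoid algebra `D[S]`
all of whose coefficients lie in `I`. -/
def coeffIn {D : Type*} (S : Type*) [CommRing D] [AddCommMonoid S] (I : Ideal D) :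
    Set (AddMonoidAlgebra D S) :=
  {f | ∀ s : S, f.coeff s ∈ I}

/-- `φ : S →+ G` realizes `G` as the quotient (Grothendieck) group of `S`:
`φ` is injective and every element of `G` is a difference of elements of `φ(S)`. -/
def IsQuotientGroup {S G : Type*} [AddCommMonoid S] [AddCommGroup G] (φ : S →+ G) : Prop :=
  Function.Injective φ ∧ ∀ g : G, ∃ s t : S, g = φ s - φ t

/-- A subgroup is cyclic if it is generated by a single element. -/
def IsCyclicAddSubgroup {G : Type*} [AddCommGroup G] (H : AddSubgroup G) : Prop :=
  ∃ g : G, H = AddSubgroup.closure {g}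

/-- `G` satisfies the ACC on cyclic subgroups: every ascending chain of cyclic
subgroups of `G` stabilizes. -/
def ACCOnCyclicSubgroups (G : Type*) [AddCommGroup G] : Prop :=
  ∀ c : ℕ →o AddSubgroup G, (∀ n, IsCyclicAddSubgroup (c n)) →
    ∃ N, ∀ n, N ≤ n → c n = c N

/-- `D` is `S`-UMT: `P[S] ∈ 𝔛(D[S])` for every `P ∈ 𝔛(D)`. -/
def IsDomainUMT (D S : Type*) [CommRing D] [AddCommMonoid S] : Prop :=
  ∀ P : Ideal D, IsHeightOnePrime P →
    ∃ Q : Ideal (AddMonoidAlgebra D S), (Q : Set (AddMonoidAlgebra D S)) = coeffIn S P ∧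
      IsHeightOnePrime Q

/-- `S` is `D`-UMT: `D[P] ∈ 𝔛(D[S])` for every `P ∈ 𝔛(S)`. -/
def IsMonoidUMT (D S : Type*) [CommRing D] [AddCommMonoid S] : Prop :=
  ∀ P : Set S, IsMinMonoidPrime P →
    ∃ Q : Ideal (AddMonoidAlgebra D S), (Q : Set (AddMonoidAlgebra D S)) = expIn D P ∧
      IsHeightOnePrime Q

/-- The localization `R_P` of `R` at a prime ideal `P`, as a subset of the fraction
field of `R`. -/
def locAt {R : Type*} [CommRing R] (P : Ideal R) : Set (FractionRing R) :=
  {x | ∃ a b : R, b ∉ P ∧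
    x * algebraMap R (FractionRing R) b = algebraMap R (FractionRing R) a}

/-- A domain `R` is weakly Krull if `R = ⋂_{P ∈ 𝔛(R)} R_P` inside its quotient field and
every nonzero nonunit of `R` lies in only finitely many height-one primes. -/
def IsWeaklyKrullDomain (R : Type*) [CommRing R] : Prop :=
  (∀ x : FractionRing R, (∀ P : Ideal R, IsHeightOnePrime P → x ∈ locAt P) →
      ∃ r : R, x = algebraMap R (FractionRing R) r) ∧
  ∀ r : R, r ≠ 0 → ¬IsUnit r → {P : Ideal R | IsHeightOnePrime P ∧ r ∈ P}.Finite

/-- The localization `S_P = {s - t : s ∈ S, t ∈ S ∖ P}` of the monoid `S` at `P`,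
inside the quotient group of `S` realized by `φ`. -/
def monLocAt {S G : Type*} [AddCommMonoid S] [AddCommGroup G] (φ : S →+ G) (P : Set S) :
    Set G :=
  {g | ∃ s t : S, t ∉ P ∧ g = φ s - φ t}

/-- A monoid `S` is weakly Krull if `S = ⋂_{P ∈ 𝔛(S)} S_P` inside its quotient group and
every nonunit of `S` lies in only finitely many minimal nonempty primes. -/
def IsWeaklyKrullMonoid {S G : Type*} [AddCommMonoid S] [AddCommGroup G] (φ : S →+ G) :
    Prop :=
  (∀ g : G, (∀ P : Set S, IsMinMonoidPrime P → g ∈ monLocAt φ P) → ∃ s : S, g = φ s) ∧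
  ∀ s : S, ¬IsAddUnit s → {P : Set S | IsMinMonoidPrime P ∧ s ∈ P}.Finite

/-- A Krull domain: a weakly Krull domain each of whose localizations at height-one
primes is a discrete rank-one valuation ring, i.e. the ring of nonnegative elements of a
`ℤ`-valued valuation on the quotient field. -/
def IsKrullDomain (R : Type*) [CommRing R] : Prop :=
  IsWeaklyKrullDomain R ∧
  ∀ P : Ideal R, IsHeightOnePrime P →
    ∃ v : (FractionRing R)ˣ →* Multiplicative ℤ,
      ∀ x : (FractionRing R)ˣ, ((x : FractionRing R) ∈ locAt P ↔ 0 ≤ Multiplicative.toAdd (v x))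

/-- A Krull monoid: a weakly Krull monoid such that for each `P ∈ 𝔛(S)` there is a
group homomorphism `v : q(S) → ℤ` with `S_P = {x : v x ≥ 0}`. -/
def IsKrullMonoid {S G : Type*} [AddCommMonoid S] [AddCommGroup G] (φ : S →+ G) : Prop :=
  IsWeaklyKrullMonoid φ ∧
  ∀ P : Set S, IsMinMonoidPrime P →
    ∃ v : G →+ ℤ, ∀ g : G, g ∈ monLocAt φ P ↔ 0 ≤ v g

/-- A generalized Krull domain: a weakly Krull domain each of whose localizations `R_P`
at height-one primes is a valuation domain: every `x` in the quotient field satisfies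
`x ∈ R_P` or `x⁻¹ ∈ R_P`. -/
def IsGeneralizedKrullDomain (R : Type*) [CommRing R] : Prop :=
  IsWeaklyKrullDomain R ∧
  ∀ P : Ideal R, IsHeightOnePrime P →
    ∀ x : FractionRing R, x ∈ locAt P ∨ ∃ y ∈ locAt P, x * y = 1

/-- A generalized Krull monoid: a weakly Krull monoid each of whose localizations `S_P`
at minimal primes is a valuation monoid of `q(S)`: `g ∈ S_P` or `-g ∈ S_P` for all `g`. -/
def IsGeneralizedKrullMonoid {S G : Type*} [AddCommMonoid S] [AddCommGroup G]
    (φ : S →+ G) : Prop :=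
  IsWeaklyKrullMonoid φ ∧
  ∀ P : Set S, IsMinMonoidPrime P → ∀ g : G, g ∈ monLocAt φ P ∨ -g ∈ monLocAt φ P

/-! ### The `t`-operation and UMT-domains -/

/-- For a subset `A` of the quotient field of `R`, the set
`A⁻¹ = {x : x • A ⊆ R}` inside the quotient field. -/
def setInv {R : Type*} [CommRing R] (A : Set (FractionRing R)) : Set (FractionRing R) :=
  {x | ∀ a ∈ A, ∃ r : R, x * a = algebraMap R (FractionRing R) r}

/-- `I_v = (I⁻¹)⁻¹` for an ideal `I` of `R`, as a subset of the quotient field. -/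
def idealV {R : Type*} [CommRing R] (I : Ideal R) : Set (FractionRing R) :=
  setInv (setInv (algebraMap R (FractionRing R) '' (I : Set R)))

/-- `I` is a `t`-ideal: `I_t = I`, i.e. `J_v ⊆ I` for every nonzero finitely generated
ideal `J ⊆ I` (the inclusion `I ⊆ I_t` always holds). -/
def IsTIdeal {R : Type*} [CommRing R] (I : Ideal R) : Prop :=
  ∀ J : Ideal R, J ≤ I → J.FG → J ≠ ⊥ →
    idealV J ⊆ algebraMap R (FractionRing R) '' (I : Set R)

/-- A maximal `t`-ideal: an ideal maximal among proper `t`-ideals. -/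
def IsMaximalTIdeal {R : Type*} [CommRing R] (I : Ideal R) : Prop :=
  I ≠ ⊤ ∧ IsTIdeal I ∧ ∀ J : Ideal R, J ≠ ⊤ → IsTIdeal J → I ≤ J → I = J

/-- A UMT-domain: every (nonzero) prime ideal of `D[X]` contracting to `(0)` in `D`
(an "upper to zero") is a maximal `t`-ideal of `D[X]`. -/
def IsUMTDomain (D : Type*) [CommRing D] : Prop :=
  ∀ Q : Ideal (Polynomial D), Q.IsPrime → Q ≠ ⊥ →
    Q.comap (Polynomial.C : D →+* Polynomial D) = ⊥ → IsMaximalTIdeal Q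

/-! ### GCD, primary elements, weak factoriality -/

/-- A GCD-domain: any two nonzero elements have a greatest common divisor. -/
def IsGCDDomain (R : Type*) [CommRing R] : Prop :=
  ∀ a b : R, a ≠ 0 → b ≠ 0 →
    ∃ d : R, d ∣ a ∧ d ∣ b ∧ ∀ e : R, e ∣ a → e ∣ b → e ∣ d

/-- Divisibility in an additive monoid: `a ∣ b ↔ b ∈ a + S`. -/
def AddDvd {S : Type*} [AddCommMonoid S] (a b : S) : Prop := ∃ c : S, b = a + c

/-- A GCD-monoid: any two elements have a greatest common divisor with respect to
the divisibility preorder. -/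
def IsGCDAddMonoid (S : Type*) [AddCommMonoid S] : Prop :=
  ∀ a b : S, ∃ d : S, AddDvd d a ∧ AddDvd d b ∧ ∀ e : S, AddDvd e a → AddDvd e b → AddDvd e d

/-- A primary element of a ring: the principal ideal it generates is primary. -/
def IsPrimaryElem {R : Type*} [CommRing R] (a : R) : Prop :=
  (Ideal.span {a} : Ideal R).IsPrimary

/-- A weakly factorial domain: every nonzero nonunit is a finite product of
primary elements. -/
def IsWeaklyFactorialDomain (R : Type*) [CommRing R] : Prop :=
  ∀ a : R, a ≠ 0 → ¬IsUnit a →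
    ∃ l : List R, (∀ b ∈ l, IsPrimaryElem b) ∧ a = l.prod

/-- A primary ideal of an additive monoid: an ideal `Q ≠ S` such that `s + t ∈ Q`
with `s ∉ Q` implies `n • t ∈ Q` for some `n ≥ 1`. -/
def IsMonoidPrimaryIdeal {S : Type*} [AddCommMonoid S] (Q : Set S) : Prop :=
  IsMonoidIdeal Q ∧ Q ≠ Set.univ ∧
    ∀ s t : S, s + t ∈ Q → s ∉ Q → ∃ n : ℕ, 1 ≤ n ∧ n • t ∈ Q

/-- A primary element of an additive monoid: the ideal `a + S` is primary. -/
def IsMonoidPrimaryElem {S : Type*} [AddCommMonoid S] (a : S) : Prop :=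
  IsMonoidPrimaryIdeal {x : S | ∃ s : S, x = a + s}

/-- A weakly factorial monoid: every nonunit is a finite sum of primary elements. -/
def IsWeaklyFactorialMonoid (S : Type*) [AddCommMonoid S] : Prop :=
  ∀ a : S, ¬IsAddUnit a →
    ∃ l : List S, (∀ b ∈ l, IsMonoidPrimaryElem b) ∧ a = l.sum

/-! ### The canonical inclusions `D[S] → K[S]` and `D[S] → D[G]` -/

/-- The canonical inclusion `D[S] → K[S]`, where `K` is the fraction field of `D`,
applying `D → K` to all coefficients. -/
noncomputable def coeffEmbed (D S : Type*) [CommRing D] [IsDomain D] [AddCommMonoid S] :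
    AddMonoidAlgebra D S →+* AddMonoidAlgebra (FractionRing D) S :=
  AddMonoidAlgebra.liftNCRingHom
    ((AddMonoidAlgebra.singleZeroRingHom).comp (algebraMap D (FractionRing D)))
    (AddMonoidAlgebra.of (FractionRing D) S) (fun {_ _} => Commute.all _ _)

/-- The canonical inclusion `D[S] → D[G]`, where `G` is the quotient group of `S`
realized by `φ`, applying `φ` to all exponents. -/
noncomputable def expEmbed (D : Type*) {S G : Type*} [CommRing D] [AddCommMonoid S]
    [AddCommGroup G] (φ : S →+ G) : AddMonoidAlgebra D S →+* AddMonoidAlgebra D G :=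
  AddMonoidAlgebra.mapDomainRingHom D φ

section MyAux

lemma uniqueSums_of_addTorsionFree {G : Type*} [AddCommGroup G]
    (h : AddTorsionFree G) : UniqueSums G := by
  have e : ℚ →+* Localization (nonZeroDivisors ℤ) :=
    (IsLocalization.algEquiv (nonZeroDivisors ℤ) ℚ
      (Localization (nonZeroDivisors ℤ))).toRingEquiv.toRingHom
  letI : Module ℚ (LocalizedModule (nonZeroDivisors ℤ) G) := Module.compHom _ e
  let F : AddHom G (LocalizedModule (nonZeroDivisors ℤ) G) :=
    { toFun := fun g => LocalizedModule.mk g 1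
      map_add' := fun g g' => by
        rw [LocalizedModule.mk_add_mk]; simp }
  have hinj : Function.Injective F := by
    intro x y hxy
    have hxy' : LocalizedModule.mk x (1 : nonZeroDivisors ℤ) = LocalizedModule.mk y 1 := hxy
    rw [LocalizedModule.mk_eq] at hxy'
    obtain ⟨u, hu⟩ := hxy'
    simp only [one_smul] at hu
    have hu' : (u : ℤ) • x = (u : ℤ) • y := hu
    have hu2 : ((u : ℤ) * (u : ℤ)) • x = ((u : ℤ) * (u : ℤ)) • y := by
      rw [mul_smul, mul_smul, hu']
    have hne : (u : ℤ) ≠ 0 := nonZeroDivisors.coe_ne_zero u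
    have hcast : (((u : ℤ).natAbs * (u : ℤ).natAbs : ℕ) : ℤ) = (u : ℤ) * (u : ℤ) := by
      exact_mod_cast Int.natAbs_mul_self
    have hk : ((u : ℤ).natAbs * (u : ℤ).natAbs) • x
        = ((u : ℤ).natAbs * (u : ℤ).natAbs) • y := by
      calc ((u : ℤ).natAbs * (u : ℤ).natAbs) • x
          = ((((u : ℤ).natAbs * (u : ℤ).natAbs : ℕ) : ℤ)) • x := (natCast_zsmul _ _).symm
        _ = (((u : ℤ).natAbs * (u : ℤ).natAbs : ℕ) : ℤ) • y := by rw [hcast, hu2, ← hcast]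
        _ = ((u : ℤ).natAbs * (u : ℤ).natAbs) • y := natCast_zsmul _ _
    exact h _ (by positivity) x y hk
  haveI : TwoUniqueSums G := TwoUniqueSums.of_injective_addHom F hinj inferInstance
  infer_instance

noncomputable def coeffMap {D E : Type*} (S : Type*) [CommRing D] [CommRing E]
    [AddCommMonoid S] (τ : D →+* E) :
    AddMonoidAlgebra D S →+* AddMonoidAlgebra E S :=
  AddMonoidAlgebra.liftNCRingHom
    ((AddMonoidAlgebra.singleZeroRingHom).comp τ)
    (AddMonoidAlgebra.of E S) (fun {_ _} => Commute.all _ _)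

lemma coeffMap_apply {D E : Type*} {S : Type*} [CommRing D] [CommRing E]
    [AddCommMonoid S] (τ : D →+* E) (f : AddMonoidAlgebra D S) (s : S) :
    (coeffMap S τ f).coeff s = τ (f.coeff s) := by
  classical
  induction f using AddMonoidAlgebra.induction_linear with
  | zero => simp [map_zero]
  | add f g hf hg =>
      rw [map_add]
      rw [AddMonoidAlgebra.coeff_add, AddMonoidAlgebra.coeff_add, Finsupp.add_apply, Finsupp.add_apply, map_add, hf, hg]
  | single a b =>
      simp [coeffMap, AddMonoidAlgebra.liftNCRingHom, AddMonoidAlgebra.singleZeroRingHom,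
        AddMonoidAlgebra.single_mul_single]
      rw [Finsupp.single_apply, Finsupp.single_apply, apply_ite τ, map_zero]

lemma coeffEmbed_apply {D S : Type*} [CommRing D] [IsDomain D] [AddCommMonoid S]
    (f : AddMonoidAlgebra D S) (s : S) :
    (coeffEmbed D S f).coeff s = algebraMap D (FractionRing D) (f.coeff s) :=
  coeffMap_apply _ f s

lemma expEmbed_eq_mapDomain {D S G : Type*} [CommRing D] [AddCommMonoid S]
    [AddCommGroup G] (φ : S →+ G) (f : AddMonoidAlgebra D S) :
    expEmbed D φ f = AddMonoidAlgebra.mapDomain φ f := rfl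

lemma exists_heightOne_extension {A B : Type*} [CommRing A] [CommRing B] [NoZeroDivisors B]
    (ι : A →+* B) (hι : Function.Injective ι) (M : Set A)
    (hMmul : ∀ m ∈ M, ∀ m' ∈ M, m * m' ∈ M)
    (hden : ∀ g : B, ∃ m ∈ M, ∃ a : A, g * ι m = ι a)
    (Q : Ideal A) (hQp : Q.IsPrime) (hQ0 : Q ≠ ⊥)
    (hQmin : ∀ R : Ideal A, R.IsPrime → R < Q → R = ⊥)
    (hMQ : ∀ m ∈ M, m ∉ Q) :
    ∃ Q' : Ideal B, IsHeightOnePrime Q' ∧ (Q : Set A) = ι ⁻¹' (Q' : Set B) := by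
  obtain ⟨m₀, hm₀, a₀, -⟩ := hden 0
  set Q' : Ideal B :=
    { carrier := {g | ∃ m ∈ M, ∃ a ∈ Q, g * ι m = ι a}
      zero_mem' := ⟨m₀, hm₀, 0, Q.zero_mem, by simp⟩
      add_mem' := by
        rintro g₁ g₂ ⟨m₁, hm₁, a₁, ha₁, h₁⟩ ⟨m₂, hm₂, a₂, ha₂, h₂⟩
        refine ⟨m₁ * m₂, hMmul _ hm₁ _ hm₂, a₁ * m₂ + a₂ * m₁,
          Q.add_mem (Q.mul_mem_right _ ha₁) (Q.mul_mem_right _ ha₂), ?_⟩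
        rw [map_mul, map_add, map_mul, map_mul]
        linear_combination ι m₂ * h₁ + ι m₁ * h₂
      smul_mem' := by
        rintro c g ⟨m, hm, a, ha, hg⟩
        obtain ⟨m', hm', a', hc⟩ := hden c
        refine ⟨m * m', hMmul _ hm _ hm', a' * a, Q.mul_mem_left a' ha, ?_⟩
        rw [smul_eq_mul, map_mul, map_mul]
        linear_combination (g * ι m) * hc + ι a' * hg } with hQ'def
  have memQ' : ∀ g : B, g ∈ Q' ↔ ∃ m ∈ M, ∃ a ∈ Q, g * ι m = ι a := fun g => Iff.rfl
  have hcontr : ∀ f : A, ι f ∈ Q' ↔ f ∈ Q := by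
    intro f
    constructor
    · rintro ⟨m, hm, a, ha, h⟩
      rw [← map_mul] at h
      have : f * m = a := hι h
      rcases hQp.mem_or_mem (this ▸ ha) with h' | h'
      · exact h'
      · exact absurd h' (hMQ m hm)
    · intro hf
      exact ⟨m₀, hm₀, f * m₀, Q.mul_mem_right _ hf, by rw [map_mul]⟩
  have hQ'p : Q'.IsPrime := by
    rw [Ideal.isPrime_iff]
    constructor
    · rw [Ideal.ne_top_iff_one]
      rintro ⟨m, hm, a, ha, h⟩
      rw [one_mul] at h
      exact hMQ m hm (hι h ▸ ha)
    · rintro f g ⟨m, hm, a, ha, hfg⟩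
      obtain ⟨m₁, hm₁, b, hb⟩ := hden f
      obtain ⟨m₂, hm₂, c, hc⟩ := hden g
      have key : a * (m₁ * m₂) = b * (c * m) := by
        apply hι
        rw [map_mul, map_mul, map_mul, map_mul]
        linear_combination (-(ι m₁ * ι m₂)) * hfg + (ι c * ι m) * hb + (f * ι m₁ * ι m) * hc
      have : b * (c * m) ∈ Q := key ▸ Q.mul_mem_right _ ha
      rcases hQp.mem_or_mem this with h' | h'
      · exact Or.inl ⟨m₁, hm₁, b, h', hb⟩
      · rcases hQp.mem_or_mem h' with h'' | h''
        · exact Or.inr ⟨m₂, hm₂, c, h'', hc⟩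
        · exact absurd h'' (hMQ m hm)
  have hιm_ne : ∀ m ∈ M, ι m ≠ 0 := by
    intro m hm h0
    have : m = 0 := hι (by rw [h0, map_zero])
    exact hMQ m hm (this ▸ Q.zero_mem)
  have hQ'0 : Q' ≠ ⊥ := by
    obtain ⟨q, hq, hq0⟩ := Submodule.exists_mem_ne_zero_of_ne_bot hQ0
    intro h
    have : ι q ∈ Q' := (hcontr q).2 hq
    rw [h, Ideal.mem_bot] at this
    exact hq0 (hι (by rw [this, map_zero]))
  refine ⟨Q', ⟨hQ'p, hQ'0, ?_⟩, ?_⟩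
  · intro R' hR' hlt
    have hRp : (R'.comap ι).IsPrime := by haveI := hR'; exact Ideal.comap_isPrime ι R'
    have hRQ : R'.comap ι ≤ Q := by
      intro x hx
      exact (hcontr x).1 (hlt.le hx)
    have hRne : R'.comap ι ≠ Q := by
      intro heq
      have : Q' ≤ R' := by
        rintro g ⟨m, hm, a, ha, h⟩
        have : ι a ∈ R' := by
          rw [← heq] at ha; exact ha
        rw [← h] at this
        rcases hR'.mem_or_mem this with h' | h'
        · exact h'
        · exact absurd ((heq ▸ (Ideal.mem_comap.2 h' : m ∈ R'.comap ι)) : m ∈ Q) (hMQ m hm)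
      exact absurd this (not_le_of_gt hlt)
    have hRbot : R'.comap ι = ⊥ := hQmin _ hRp (lt_of_le_of_ne hRQ hRne)
    rw [eq_bot_iff]
    intro g hg
    obtain ⟨m, hm, a, hga⟩ := hden g
    have : a ∈ R'.comap ι := by
      rw [Ideal.mem_comap, ← hga]
      exact R'.mul_mem_right _ hg
    rw [hRbot, Ideal.mem_bot] at this
    rw [this, map_zero] at hga
    rcases mul_eq_zero.1 hga with h' | h'
    · exact Ideal.mem_bot.2 h'
    · exact absurd h' (hιm_ne m hm)
  · ext f
    exact (hcontr f).symm

lemma mem_expIn {D : Type*} {S : Type*} [CommRing D] [AddCommMonoid S] {P : Set S}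
    {f : AddMonoidAlgebra D S} : f ∈ expIn D P ↔ ∀ s ∈ f.coeff.support, s ∈ P := Iff.rfl

def expIdeal (D : Type*) {S : Type*} [CommRing D] [AddCommMonoid S] (P : Set S)
    (hP : ∀ p ∈ P, ∀ s : S, p + s ∈ P) : Ideal (AddMonoidAlgebra D S) where
  carrier := expIn D P
  zero_mem' := by refine mem_expIn.2 fun s hs => ?_; simp at hs
  add_mem' := by
    classical
    intro f g hf hg
    refine mem_expIn.2 fun s hs => ?_
    rcases Finset.mem_union.1 (Finsupp.support_add hs) with h | h
    · exact hf s h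
    · exact hg s h
  smul_mem' := by
    classical
    intro c f hf
    refine mem_expIn.2 fun s hs => ?_
    rw [smul_eq_mul] at hs
    obtain ⟨a, ha, b, hb, rfl⟩ := Finset.mem_add.1 (AddMonoidAlgebra.support_coeff_mul_subset c f hs)
    rw [add_comm]
    exact hP b (hf b hb) a

lemma mem_expIdeal_iff {D : Type*} {S : Type*} [CommRing D] [AddCommMonoid S] {P : Set S}
    {hP : ∀ p ∈ P, ∀ s : S, p + s ∈ P} {f : AddMonoidAlgebra D S} :
    f ∈ expIdeal D P hP ↔ f ∈ expIn D P := Iff.rfl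

lemma single_mem_expIn_iff {D : Type*} {S : Type*} [CommRing D] [Nontrivial D]
    [AddCommMonoid S] {P : Set S} {s : S} :
    AddMonoidAlgebra.single s (1 : D) ∈ expIn D P ↔ s ∈ P := by
  constructor
  · intro h
    exact mem_expIn.1 h s (by simp [Finsupp.support_single_ne_zero s (one_ne_zero : (1:D) ≠ 0)])
  · intro hs
    refine mem_expIn.2 fun t ht => ?_
    rw [AddMonoidAlgebra.coeff_single] at ht
    rw [Finsupp.support_single_ne_zero s (one_ne_zero : (1:D) ≠ 0), Finset.mem_singleton] at ht
    exact ht ▸ hs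

lemma expIdeal_isPrime {D : Type*} {S : Type*} [CommRing D] [IsDomain D] [AddCommMonoid S]
    [UniqueSums S] {P : Set S} (hP : IsMonoidPrimeIdeal P) :
    (expIdeal D P hP.1.2).IsPrime := by
  classical
  rw [Ideal.isPrime_iff]
  constructor
  · rw [Ideal.ne_top_iff_one]
    intro h1
    have h0 : (0 : S) ∈ P := by
      refine mem_expIn.1 (mem_expIdeal_iff.1 h1) 0 ?_
      rw [AddMonoidAlgebra.one_def]
      simp [Finsupp.support_single_ne_zero (0:S) (one_ne_zero : (1:D) ≠ 0)]
    apply hP.2.1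
    ext s
    simp only [Set.mem_univ, iff_true]
    have := hP.1.2 0 h0 s
    rwa [zero_add] at this
  · intro f g hfg
    by_contra hc
    push_neg at hc
    obtain ⟨hf, hg⟩ := hc
    set f' : AddMonoidAlgebra D S := AddMonoidAlgebra.ofCoeff (f.coeff.filter (fun s => s ∉ P)) with hf'def
    set g' : AddMonoidAlgebra D S := AddMonoidAlgebra.ofCoeff (g.coeff.filter (fun s => s ∉ P)) with hg'def
    set fP : AddMonoidAlgebra D S := AddMonoidAlgebra.ofCoeff (f.coeff.filter (fun s => s ∈ P)) with hfPdef
    set gP : AddMonoidAlgebra D S := AddMonoidAlgebra.ofCoeff (g.coeff.filter (fun s => s ∈ P)) with hgPdef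
    have hfsplit : fP + f' = f := AddMonoidAlgebra.coeff_injective (Finsupp.filter_pos_add_filter_neg f.coeff _)
    have hgsplit : gP + g' = g := AddMonoidAlgebra.coeff_injective (Finsupp.filter_pos_add_filter_neg g.coeff _)
    have hfP : fP ∈ expIdeal D P hP.1.2 := by
      rw [mem_expIdeal_iff]
      refine mem_expIn.2 fun s hs => ?_
      rw [hfPdef, AddMonoidAlgebra.coeff_ofCoeff, Finsupp.support_filter, Finset.mem_filter] at hs
      exact hs.2
    have hgP : gP ∈ expIdeal D P hP.1.2 := by
      rw [mem_expIdeal_iff]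
      refine mem_expIn.2 fun s hs => ?_
      rw [hgPdef, AddMonoidAlgebra.coeff_ofCoeff, Finsupp.support_filter, Finset.mem_filter] at hs
      exact hs.2
    have hf'ne : f' ≠ 0 := by
      obtain ⟨s, hs⟩ : ∃ s ∈ f.coeff.support, s ∉ P := by
        by_contra h
        push_neg at h
        exact hf (mem_expIdeal_iff.2 (mem_expIn.2 h))
      intro h0
      have : f'.coeff s = f.coeff s := Finsupp.filter_apply_pos _ _ hs.2
      rw [h0] at this
      exact Finsupp.mem_support_iff.1 hs.1 this.symm
    have hg'ne : g' ≠ 0 := by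
      obtain ⟨s, hs⟩ : ∃ s ∈ g.coeff.support, s ∉ P := by
        by_contra h
        push_neg at h
        exact hg (mem_expIdeal_iff.2 (mem_expIn.2 h))
      intro h0
      have : g'.coeff s = g.coeff s := Finsupp.filter_apply_pos _ _ hs.2
      rw [h0] at this
      exact Finsupp.mem_support_iff.1 hs.1 this.symm
    have hmem : f' * g' ∈ expIdeal D P hP.1.2 := by
      have heq : f' * g' = f * g - fP * g - f' * gP := by
        calc f' * g' = (fP + f') * (gP + g') - fP * (gP + g') - f' * gP := by ring
        _ = f * g - fP * g - f' * gP := by rw [hfsplit, hgsplit]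
      rw [heq]
      exact Ideal.sub_mem _ (Ideal.sub_mem _ hfg (Ideal.mul_mem_right _ _ hfP))
        (Ideal.mul_mem_left _ _ hgP)
    have hne : f' * g' ≠ 0 := mul_ne_zero hf'ne hg'ne
    obtain ⟨z, hz⟩ := Finsupp.support_nonempty_iff.2 (mt AddMonoidAlgebra.coeff_eq_zero.1 hne)
    obtain ⟨a, ha, b, hb, rfl⟩ := Finset.mem_add.1 (AddMonoidAlgebra.support_coeff_mul_subset f' g' hz)
    rw [hf'def, AddMonoidAlgebra.coeff_ofCoeff, Finsupp.support_filter, Finset.mem_filter] at ha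
    rw [hg'def, AddMonoidAlgebra.coeff_ofCoeff, Finsupp.support_filter, Finset.mem_filter] at hb
    rcases hP.2.2 a b (mem_expIn.1 (mem_expIdeal_iff.1 hmem) _ hz) with h | h
    · exact ha.2 h
    · exact hb.2 h

end MyAux

/-- For a domain `D` with quotient field `K` and a torsion-free monoid `S`
with quotient group `G`, every height-one prime of `D[S]` either is of the form `P[S]` for
`P ∈ 𝔛(D)`, or is the contraction of a height-one prime of `K[S]`; and likewise it either
is of the form `D[P]` for `P ∈ 𝔛(S)`, or is the contraction of a height-one prime
of `D[G]`. -/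
theorem heightOnePrime_of_addMonoidAlgebra
    {D S G : Type*} [CommRing D] [IsDomain D] [AddCancelCommMonoid S] [AddCommGroup G]
    (hS : AddTorsionFree S) (φ : S →+ G) (hφ : IsQuotientGroup φ)
    (Q : Ideal (AddMonoidAlgebra D S)) (hQ : IsHeightOnePrime Q) :
    ((∃ P : Ideal D, IsHeightOnePrime P ∧
        (Q : Set (AddMonoidAlgebra D S)) = coeffIn S P) ∨
      (∃ Q' : Ideal (AddMonoidAlgebra (FractionRing D) S), IsHeightOnePrime Q' ∧
        (Q : Set (AddMonoidAlgebra D S)) =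
          coeffEmbed D S ⁻¹' (Q' : Set (AddMonoidAlgebra (FractionRing D) S)))) ∧
    ((∃ P : Set S, IsMinMonoidPrime P ∧
        (Q : Set (AddMonoidAlgebra D S)) = expIn D P) ∨
      (∃ Q' : Ideal (AddMonoidAlgebra D G), IsHeightOnePrime Q' ∧
        (Q : Set (AddMonoidAlgebra D S)) =
          expEmbed D φ ⁻¹' (Q' : Set (AddMonoidAlgebra D G)))) := by
  classical
  obtain ⟨hQp, hQ0, hQmin⟩ := hQ
  haveI := hQp
  -- G is torsion-free
  have hG : AddTorsionFree G := by
    intro n hn x y hxy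
    obtain ⟨s, t, hst⟩ := hφ.2 (x - y)
    have h1 : n • (x - y) = 0 := by rw [smul_sub, hxy, sub_self]
    have h2 : φ (n • s) = φ (n • t) := by
      rw [map_nsmul, map_nsmul]
      have h3 : n • (φ s - φ t) = 0 := by rw [← hst]; exact h1
      rw [smul_sub] at h3
      exact sub_eq_zero.1 h3
    have hst' : s = t := hS n hn s t (hφ.1 h2)
    have h4 : x - y = 0 := by rw [hst, hst', sub_self]
    exact sub_eq_zero.1 h4
  haveI hUG : UniqueSums G := uniqueSums_of_addTorsionFree hG
  haveI hUS : UniqueSums S := UniqueSums.of_injective_addHom φ.toAddHom hφ.1 hUG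
  constructor
  · -- Part 1: coefficients
    have hmemJ : ∀ (R : Ideal D) (f : AddMonoidAlgebra D S),
        f ∈ RingHom.ker (coeffMap S (Ideal.Quotient.mk R)) ↔ ∀ s : S, f.coeff s ∈ R := by
      intro R f
      rw [RingHom.mem_ker]
      constructor
      · intro h s
        have h' : (coeffMap S (Ideal.Quotient.mk R) f).coeff s = 0 := by rw [h]; rfl
        rw [coeffMap_apply] at h'
        exact Ideal.Quotient.eq_zero_iff_mem.1 h'
      · intro h
        refine AddMonoidAlgebra.ext (Finsupp.ext fun s => ?_)
        rw [coeffMap_apply, AddMonoidAlgebra.coeff_zero, Finsupp.zero_apply]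
        exact Ideal.Quotient.eq_zero_iff_mem.2 (h s)
    have hkerPrime : ∀ (R : Ideal D), R.IsPrime →
        (RingHom.ker (coeffMap S (Ideal.Quotient.mk R))).IsPrime := by
      intro R hR
      haveI := hR
      haveI : IsDomain (AddMonoidAlgebra (D ⧸ R) S) := by
        haveI : Nontrivial (AddMonoidAlgebra (D ⧸ R) S) := by
          refine ⟨⟨AddMonoidAlgebra.single 0 1, 0, ?_⟩⟩
          exact fun h => (one_ne_zero : (1:D⧸R) ≠ 0) (AddMonoidAlgebra.single_eq_zero.1 h)
        exact NoZeroDivisors.to_isDomain _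
      exact RingHom.ker_isPrime _
    by_cases hconst : ∃ d : D, d ≠ 0 ∧ AddMonoidAlgebra.single (0 : S) d ∈ Q
    · left
      obtain ⟨d, hd0, hdQ⟩ := hconst
      set P : Ideal D := Q.comap (AddMonoidAlgebra.singleZeroRingHom (R := D) (M := S))
        with hPdef
      have hmemP : ∀ e : D, e ∈ P ↔ AddMonoidAlgebra.single (0 : S) e ∈ Q := by
        intro e
        rw [hPdef, Ideal.mem_comap]
        rfl
      haveI hPp : P.IsPrime := Ideal.comap_isPrime _ Q
      have hdP : d ∈ P := (hmemP d).2 hdQ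
      set J := RingHom.ker (coeffMap S (Ideal.Quotient.mk P)) with hJdef
      have hJle : J ≤ Q := by
        intro f hf
        rw [hmemJ] at hf
        rw [← AddMonoidAlgebra.sum_coeff_single f, Finsupp.sum]
        refine Ideal.sum_mem _ fun s hs => ?_
        have h2 : AddMonoidAlgebra.single s (f.coeff s)
            = AddMonoidAlgebra.single (0 : S) (f.coeff s) * AddMonoidAlgebra.single s 1 := by
          rw [AddMonoidAlgebra.single_mul_single, zero_add, mul_one]
        show AddMonoidAlgebra.single s (f.coeff s) ∈ Q
        rw [h2]
        exact Ideal.mul_mem_right _ _ ((hmemP _).1 (hf s))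
      have hsingle_mem_J : ∀ (R : Ideal D) (e : D), e ∈ R →
          AddMonoidAlgebra.single (0 : S) e ∈ RingHom.ker (coeffMap S (Ideal.Quotient.mk R)) := by
        intro R e he
        rw [hmemJ]
        intro s
        rw [AddMonoidAlgebra.coeff_single, Finsupp.single_apply]
        split
        · exact he
        · exact R.zero_mem
      have hJ0 : J ≠ ⊥ := by
        rw [Submodule.ne_bot_iff]
        exact ⟨AddMonoidAlgebra.single (0 : S) d, hsingle_mem_J P d hdP,
          fun h => hd0 (AddMonoidAlgebra.single_eq_zero.1 h)⟩
      have hJQ : J = Q := by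
        by_contra hne
        exact hJ0 (hQmin _ (hkerPrime P hPp) (lt_of_le_of_ne hJle hne))
      refine ⟨P, ⟨hPp, ?_, ?_⟩, ?_⟩
      · intro h
        rw [h, Ideal.mem_bot] at hdP
        exact hd0 hdP
      · intro R hRp hRP
        set JR := RingHom.ker (coeffMap S (Ideal.Quotient.mk R)) with hJRdef
        have hJRle : JR ≤ Q := by
          refine le_trans (fun f hf => ?_) hJle
          rw [hmemJ] at hf ⊢
          exact fun s => hRP.le (hf s)
        have hJRne : JR ≠ Q := by
          intro heq
          obtain ⟨p, hpP, hpR⟩ := SetLike.exists_of_lt hRP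
          have h1 : AddMonoidAlgebra.single (0 : S) p ∈ Q := (hmemP p).1 hpP
          rw [← heq, hmemJ] at h1
          have := h1 0
          rw [AddMonoidAlgebra.coeff_single, Finsupp.single_eq_same] at this
          exact hpR this
        have hJRbot : JR = ⊥ := hQmin _ (hkerPrime R hRp) (lt_of_le_of_ne hJRle hJRne)
        rw [eq_bot_iff]
        intro r hr
        have h1 : AddMonoidAlgebra.single (0 : S) r ∈ JR := hsingle_mem_J R r hr
        rw [hJRbot, Ideal.mem_bot] at h1
        exact Ideal.mem_bot.2 (AddMonoidAlgebra.single_eq_zero.1 h1)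
      · ext f
        rw [SetLike.mem_coe, ← hJQ]
        exact (hmemJ P f).trans Iff.rfl
    · right
      set K := FractionRing D
      have hinj : Function.Injective (coeffEmbed D S) := by
        intro f g h
        refine AddMonoidAlgebra.ext (Finsupp.ext fun s => ?_)
        apply IsFractionRing.injective D K
        rw [← coeffEmbed_apply, ← coeffEmbed_apply, h]
      set MA : Set (AddMonoidAlgebra D S) :=
        {f | ∃ d : D, d ≠ 0 ∧ f = AddMonoidAlgebra.single (0 : S) d} with hMAdef
      have hMmul : ∀ m ∈ MA, ∀ m' ∈ MA, m * m' ∈ MA := by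
        rintro _ ⟨d, hd, rfl⟩ _ ⟨e, he, rfl⟩
        exact ⟨d * e, mul_ne_zero hd he,
          by rw [AddMonoidAlgebra.single_mul_single, zero_add]⟩
      have hden : ∀ g : AddMonoidAlgebra K S, ∃ m ∈ MA, ∃ a : AddMonoidAlgebra D S,
          g * coeffEmbed D S m = coeffEmbed D S a := by
        intro g
        obtain ⟨b, hb⟩ := IsLocalization.exist_integer_multiples_of_finset
          (nonZeroDivisors D) (g.coeff.support.image g.coeff)
        have hb' : ∀ x : S, ∃ e : D, algebraMap D K e = g.coeff x * algebraMap D K (b : D) := by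
          intro x
          by_cases hx : x ∈ g.coeff.support
          · obtain ⟨e, he⟩ := hb (g.coeff x) (Finset.mem_image_of_mem g.coeff hx)
            exact ⟨e, by rw [he, Algebra.smul_def, mul_comm]⟩
          · exact ⟨0, by rw [Finsupp.notMem_support_iff.1 hx, zero_mul, map_zero]⟩
        choose n hn using hb'
        set a : AddMonoidAlgebra D S := AddMonoidAlgebra.ofCoeff (Finsupp.onFinset g.coeff.support n (fun x hx => by
          by_contra hxs
          apply hx
          apply IsFractionRing.injective D K
          rw [hn x, Finsupp.notMem_support_iff.1 hxs, zero_mul, map_zero])) with hadef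
        refine ⟨AddMonoidAlgebra.single (0 : S) (b : D),
          ⟨(b : D), nonZeroDivisors.coe_ne_zero b, rfl⟩, a, ?_⟩
        refine AddMonoidAlgebra.ext (Finsupp.ext fun x => ?_)
        have h1 : coeffEmbed D S (AddMonoidAlgebra.single (0 : S) (b : D))
            = AddMonoidAlgebra.single (0 : S) (algebraMap D K (b : D)) := by
          refine AddMonoidAlgebra.ext (Finsupp.ext fun y => ?_)
          rw [coeffEmbed_apply, AddMonoidAlgebra.coeff_single, AddMonoidAlgebra.coeff_single, Finsupp.single_apply, Finsupp.single_apply, apply_ite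
            (algebraMap D K), map_zero]
        rw [h1, AddMonoidAlgebra.coeff_mul_single_zero, coeffEmbed_apply, hadef]
        exact (hn x).symm
      have hMQ : ∀ m ∈ MA, m ∉ Q := by
        rintro _ ⟨d, hd, rfl⟩ h
        exact hconst ⟨d, hd, h⟩
      obtain ⟨Q', hQ', hset⟩ := exists_heightOne_extension (coeffEmbed D S) hinj MA
        hMmul hden Q hQp hQ0 hQmin hMQ
      exact ⟨Q', hQ', hset⟩
  · -- Part 2: exponents
    by_cases hmono : ∃ s : S, AddMonoidAlgebra.single s (1 : D) ∈ Q
    · left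
      obtain ⟨s₀, hs₀⟩ := hmono
      set P : Set S := {s : S | AddMonoidAlgebra.single s (1 : D) ∈ Q} with hPdef
      have hPideal : ∀ p ∈ P, ∀ s : S, p + s ∈ P := by
        intro p hp s
        show AddMonoidAlgebra.single (p + s) (1 : D) ∈ Q
        have h1 : AddMonoidAlgebra.single (p + s) (1 : D)
            = AddMonoidAlgebra.single p 1 * AddMonoidAlgebra.single s 1 := by
          rw [AddMonoidAlgebra.single_mul_single, one_mul]
        rw [h1]
        exact Ideal.mul_mem_right _ _ hp
      have hPprime : IsMonoidPrimeIdeal P := by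
        refine ⟨⟨⟨s₀, hs₀⟩, hPideal⟩, ?_, ?_⟩
        · intro h
          have h0 : (0 : S) ∈ P := h ▸ Set.mem_univ 0
          refine hQp.ne_top ((Ideal.eq_top_iff_one _).2 ?_)
          rw [AddMonoidAlgebra.one_def]
          exact h0
        · intro s t hst
          have h1 : AddMonoidAlgebra.single s (1 : D) * AddMonoidAlgebra.single t 1 ∈ Q := by
            rw [AddMonoidAlgebra.single_mul_single, one_mul]
            exact hst
          exact hQp.mem_or_mem h1
      have hPle : ∀ (P' : Set S) (hP' : ∀ p ∈ P', ∀ s : S, p + s ∈ P'), P' ⊆ P →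
          expIdeal D P' hP' ≤ Q := by
        intro P' hP' hsub f hf
        rw [mem_expIdeal_iff] at hf
        rw [← AddMonoidAlgebra.sum_coeff_single f, Finsupp.sum]
        refine Ideal.sum_mem _ fun s hs => ?_
        have h2 : AddMonoidAlgebra.single s (f.coeff s)
            = AddMonoidAlgebra.single s (1 : D) * AddMonoidAlgebra.single (0 : S) (f.coeff s) := by
          rw [AddMonoidAlgebra.single_mul_single, add_zero, one_mul]
        show AddMonoidAlgebra.single s (f.coeff s) ∈ Q
        rw [h2]
        exact Ideal.mul_mem_right _ _ (hsub (mem_expIn.1 hf s hs))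
      have hJQ : ∀ (P' : Set S) (hP'p : IsMonoidPrimeIdeal P'), P' ⊆ P →
          expIdeal D P' hP'p.1.2 = Q := by
        intro P' hP'p hsub
        have hle : expIdeal D P' hP'p.1.2 ≤ Q := hPle P' hP'p.1.2 hsub
        by_contra hne
        have hbot := hQmin _ (expIdeal_isPrime hP'p) (lt_of_le_of_ne hle hne)
        obtain ⟨s', hs'⟩ := hP'p.1.1
        have h1 : AddMonoidAlgebra.single s' (1 : D) ∈ expIdeal D P' hP'p.1.2 :=
          mem_expIdeal_iff.2 (single_mem_expIn_iff.2 hs')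
        rw [hbot, Ideal.mem_bot] at h1
        exact (one_ne_zero : (1:D) ≠ 0) (AddMonoidAlgebra.single_eq_zero.1 h1)
      have hPQ : expIdeal D P hPprime.1.2 = Q := hJQ P hPprime subset_rfl
      refine ⟨P, ⟨hPprime, ?_⟩, ?_⟩
      · intro P' hP'p hsub
        have h1 : expIdeal D P' hP'p.1.2 = Q := hJQ P' hP'p hsub
        ext s
        constructor
        · intro hs
          exact hsub hs
        · intro hs
          have h2 : AddMonoidAlgebra.single s (1 : D) ∈ expIdeal D P hPprime.1.2 :=
            mem_expIdeal_iff.2 (single_mem_expIn_iff.2 hs)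
          rw [hPQ, ← h1, mem_expIdeal_iff] at h2
          exact single_mem_expIn_iff.1 h2
      · ext f
        rw [SetLike.mem_coe, ← hPQ]
        exact Iff.rfl
    · right
      have hinj : Function.Injective (expEmbed D φ) := by
        intro f g h
        rw [expEmbed_eq_mapDomain, expEmbed_eq_mapDomain] at h
        exact AddMonoidAlgebra.mapDomain_injective hφ.1 h
      set MB : Set (AddMonoidAlgebra D S) :=
        {f | ∃ s : S, f = AddMonoidAlgebra.single s (1 : D)} with hMBdef
      have hMmul : ∀ m ∈ MB, ∀ m' ∈ MB, m * m' ∈ MB := by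
        rintro _ ⟨s, rfl⟩ _ ⟨t, rfl⟩
        exact ⟨s + t, by rw [AddMonoidAlgebra.single_mul_single, one_mul]⟩
      have hden : ∀ g : AddMonoidAlgebra D G, ∃ m ∈ MB, ∃ a : AddMonoidAlgebra D S,
          g * expEmbed D φ m = expEmbed D φ a := by
        intro g
        choose σ τ hστ using hφ.2
        set T : S := ∑ x ∈ g.coeff.support, τ x with hT
        set g' := g * AddMonoidAlgebra.single (φ T) (1 : D) with hg'def
        have hrange : ↑g'.coeff.support ⊆ Set.range φ := by
          intro z hz
          obtain ⟨x, hx, w, hw, rfl⟩ := Finset.mem_add.1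
            (AddMonoidAlgebra.support_coeff_mul_subset _ _ hz)
          have hw' : w = φ T := by
            rw [AddMonoidAlgebra.coeff_single] at hw
            rw [Finsupp.support_single_ne_zero _ (one_ne_zero : (1:D) ≠ 0),
              Finset.mem_singleton] at hw
            exact hw
          subst hw'
          refine ⟨σ x + ∑ y ∈ g.coeff.support.erase x, τ y, ?_⟩
          have hsum : τ x + ∑ y ∈ g.coeff.support.erase x, τ y = T := Finset.add_sum_erase _ τ hx
          have h5 : x + φ (τ x) = φ (σ x) := (sub_eq_iff_eq_add.1 (hστ x).symm).symm
          rw [map_add, ← h5, ← hsum, map_add]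
          abel
        refine ⟨AddMonoidAlgebra.single T (1 : D), ⟨T, rfl⟩,
          AddMonoidAlgebra.comapDomain φ hφ.1 g', ?_⟩
        have h1 : expEmbed D φ (AddMonoidAlgebra.single T (1 : D))
            = AddMonoidAlgebra.single (φ T) (1 : D) := by
          rw [expEmbed_eq_mapDomain]
          exact AddMonoidAlgebra.mapDomain_single
        rw [h1, expEmbed_eq_mapDomain, AddMonoidAlgebra.mapDomain_comapDomain hrange]
      have hMQ : ∀ m ∈ MB, m ∉ Q := by
        rintro _ ⟨s, rfl⟩ h
        exact hmono ⟨s, h⟩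
      obtain ⟨Q', hQ', hset⟩ := exists_heightOne_extension (expEmbed D φ) hinj MB
        hMmul hden Q hQp hQ0 hQmin hMQ
      exact ⟨Q', hQ', hset⟩
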